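/- Let X be a compact Hausdorff space, X₀ a dense subset of X, and A a norm-bounded subset of C(X). Suppose that for every sequence (fₙ) in A and every sequence (xₘ) in X₀, whenever both iterated limits limₙ limₘ fₙ(xₘ) and limₘ limₙ fₙ(xₘ) exist, they are equal. Then the closure of A in ℝ^X (with the product topology) is contained in C(X). -/

import Mathlib

open Filter Topology

/-- Grothendieck's criterion, key step: if `A ⊆ C(X)` is norm-bounded and satisfies the
double limit condition with respect to a dense subset `X₀`, then every function in the
closure of `A` in `ℝ^X` (product topology) is continuous. -/
theorem double_limit_implies_pointwise_closure_continuous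
    {X : Type*} [TopologicalSpace X] [CompactSpace X] [T2Space X]
    (X₀ : Set X) (hX₀ : Dense X₀)
    (A : Set C(X, ℝ))
    (hbdd : ∃ r : ℝ, ∀ f ∈ A, ‖f‖ ≤ r)
    (hdl : ∀ (f : ℕ → C(X, ℝ)), (∀ n, f n ∈ A) →
      ∀ (x : ℕ → X), (∀ m, x m ∈ X₀) →
      ∀ (a b : ℕ → ℝ) (L₁ L₂ : ℝ),
        (∀ n, Tendsto (fun m => f n (x m)) atTop (𝓝 (a n))) →
        (∀ m, Tendsto (fun n => f n (x m)) atTop (𝓝 (b m))) →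
        Tendsto a atTop (𝓝 L₁) → Tendsto b atTop (𝓝 L₂) → L₁ = L₂) :
    ∀ g ∈ closure ((fun f : C(X, ℝ) => (f : X → ℝ)) '' A), Continuous g := by
  classical
  obtain ⟨r, hr⟩ := hbdd
  intro g hg
  by_contra hcont
  -- approximation of `g` on finite sets by members of `A`
  have approx : ∀ (S : Finset X), ∀ δ : ℝ, 0 < δ →
      ∃ f ∈ A, ∀ x ∈ S, dist (f x) (g x) < δ := by
    intro S δ hδ
    have hU : {h : X → ℝ | ∀ x ∈ S, dist (h x) (g x) < δ} ∈ 𝓝 g := by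
      have hEq : {h : X → ℝ | ∀ x ∈ S, dist (h x) (g x) < δ}
          = ⋂ x ∈ S, (fun h : X → ℝ => h x) ⁻¹' Metric.ball (g x) δ := by
        ext h; simp [Metric.mem_ball]
      rw [hEq]
      exact (Filter.biInter_finset_mem S).mpr fun x _ =>
        (continuous_apply x).continuousAt (Metric.ball_mem_nhds _ hδ)
    obtain ⟨h, hhU, hhs⟩ := mem_closure_iff_nhds.mp hg _ hU
    obtain ⟨f, hfA, rfl⟩ := hhs
    exact ⟨f, hfA, hhU⟩
  -- `g` is bounded by `r`
  have hgb : ∀ x, g x ∈ Metric.closedBall (0 : ℝ) r := by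
    intro x
    have h1 : g x ∈ closure ((fun h : X → ℝ => h x) ''
        ((fun f : C(X, ℝ) => (f : X → ℝ)) '' A)) :=
      image_closure_subset_closure_image (continuous_apply x) ⟨g, hg, rfl⟩
    refine closure_minimal ?_ Metric.isClosed_closedBall h1
    rintro _ ⟨_, ⟨f, hfA, rfl⟩, rfl⟩
    exact mem_closedBall_zero_iff.mpr (le_trans (f.norm_coe_le_norm x) (hr f hfA))
  -- sets defined by finitely many functions are open
  have hopen : ∀ (F : Finset C(X, ℝ)) (q : X) (c : ℝ),
      IsOpen {x | ∀ f ∈ F, dist (f x) (f q) < c} := by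
    intro F q c
    have hEq : {x | ∀ f ∈ F, dist (f x) (f q) < c}
        = ⋂ f ∈ F, {x | dist (f x) (f q) < c} := by ext x; simp
    rw [hEq]
    exact isOpen_biInter_finset fun f _ =>
      isOpen_lt (f.continuous.dist continuous_const) continuous_const
  -- a point of discontinuity with oscillation witnesses
  rw [continuous_iff_continuousAt] at hcont
  push_neg at hcont
  obtain ⟨x₀, hx₀⟩ := hcont
  rw [ContinuousAt, Metric.tendsto_nhds] at hx₀
  push_neg at hx₀
  obtain ⟨ε, hε, hfreq⟩ := hx₀
  have osc : ∀ U ∈ 𝓝 x₀, ∃ y ∈ U, ε ≤ dist (g y) (g x₀) := by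
    intro U hU
    obtain ⟨y, hyU, hy⟩ := Filter.frequently_iff.mp hfreq hU
    exact ⟨y, hyU, hy⟩
  -- there is a "bad point" `p` with witnesses in `X₀`
  have hbad : ∃ p : X, ∀ (F : Finset C(X, ℝ)) (δ : ℝ), 0 < δ →
      ∃ z ∈ X₀, (∀ f ∈ F, dist (f z) (f p) < δ) ∧ ε / 2 ≤ dist (g z) (g p) := by
    by_cases hcase : ∀ (F : Finset C(X, ℝ)) (δ : ℝ), 0 < δ →
        ∃ z ∈ X₀, (∀ f ∈ F, dist (f z) (f x₀) < δ) ∧ ε / 2 ≤ dist (g z) (g x₀)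
    · exact ⟨x₀, hcase⟩
    · push_neg at hcase
      obtain ⟨F₀, δ₀, hδ₀, hF₀⟩ := hcase
      have hV : {x | ∀ f ∈ F₀, dist (f x) (f x₀) < δ₀ / 2} ∈ 𝓝 x₀ :=
        (hopen F₀ x₀ (δ₀ / 2)).mem_nhds (by simp [half_pos hδ₀])
      obtain ⟨y, hyV, hy⟩ := osc _ hV
      refine ⟨y, fun F δ hδ => ?_⟩
      have hW : IsOpen ({x | ∀ f ∈ F, dist (f x) (f y) < δ} ∩
          {x | ∀ f ∈ F₀, dist (f x) (f y) < δ₀ / 2}) :=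
        (hopen F y δ).inter (hopen F₀ y (δ₀ / 2))
      have hyW : y ∈ ({x | ∀ f ∈ F, dist (f x) (f y) < δ} ∩
          {x | ∀ f ∈ F₀, dist (f x) (f y) < δ₀ / 2}) :=
        ⟨by simp [hδ], by simp [half_pos hδ₀]⟩
      obtain ⟨z, hz₀, hzW⟩ := hX₀.exists_mem_open hW ⟨y, hyW⟩
      refine ⟨z, hz₀, hzW.1, ?_⟩
      have hzx₀ : ∀ f ∈ F₀, dist (f z) (f x₀) < δ₀ := by
        intro f hf
        calc dist (f z) (f x₀) ≤ dist (f z) (f y) + dist (f y) (f x₀) := dist_triangle _ _ _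
          _ < δ₀ / 2 + δ₀ / 2 := add_lt_add (hzW.2 f hf) (hyV f hf)
          _ = δ₀ := add_halves δ₀
      have h1 : dist (g z) (g x₀) < ε / 2 := hF₀ z hz₀ hzx₀
      have h2 := dist_triangle (g y) (g z) (g x₀)
      have h3 := dist_comm (g z) (g y)
      linarith
  obtain ⟨p, hp⟩ := hbad
  -- build interleaved sequences of functions and points
  have hstep : ∀ s : Finset (ℕ × C(X, ℝ) × X),
      (∀ a ∈ s, (fun a : ℕ × C(X, ℝ) × X => a.2.1 ∈ A ∧ a.2.2 ∈ X₀ ∧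
          dist (a.2.1 p) (g p) < 1 / (a.1 + 1) ∧
          dist (a.2.1 a.2.2) (a.2.1 p) < 1 / (a.1 + 1) ∧
          ε / 2 ≤ dist (g a.2.2) (g p)) a) →
      ∃ y, (fun a : ℕ × C(X, ℝ) × X => a.2.1 ∈ A ∧ a.2.2 ∈ X₀ ∧
          dist (a.2.1 p) (g p) < 1 / (a.1 + 1) ∧
          dist (a.2.1 a.2.2) (a.2.1 p) < 1 / (a.1 + 1) ∧
          ε / 2 ≤ dist (g a.2.2) (g p)) y ∧
        ∀ a ∈ s, (fun a b : ℕ × C(X, ℝ) × X => a.1 < b.1 ∧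
          dist (b.2.1 a.2.2) (g a.2.2) < 1 / (b.1 + 1) ∧
          dist (a.2.1 b.2.2) (a.2.1 p) < 1 / (b.1 + 1)) a y := by
    intro s _
    set N : ℕ := (s.image Prod.fst).sup id + 1 with hN
    have hNpos : (0 : ℝ) < 1 / (N + 1) := by positivity
    obtain ⟨f, hfA, hf⟩ := approx (insert p (s.image (fun a => a.2.2))) (1 / (N + 1)) hNpos
    obtain ⟨z, hz₀, hz1, hz2⟩ := hp (insert f (s.image (fun a => a.2.1))) (1 / (N + 1)) hNpos
    refine ⟨(N, f, z), ⟨hfA, hz₀, hf p (Finset.mem_insert_self _ _),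
      hz1 f (Finset.mem_insert_self _ _), hz2⟩, ?_⟩
    intro a ha
    refine ⟨?_, ?_, ?_⟩
    · exact Nat.lt_succ_of_le (Finset.le_sup (f := id) (Finset.mem_image_of_mem Prod.fst ha))
    · exact hf a.2.2 (Finset.mem_insert_of_mem (Finset.mem_image_of_mem _ ha))
    · exact hz1 a.2.1 (Finset.mem_insert_of_mem (Finset.mem_image_of_mem _ ha))
  obtain ⟨t, htP, htr⟩ := exists_seq_of_forall_finset_exists _ _ hstep
  set k : ℕ → ℕ := fun n => (t n).1 with hk
  set f : ℕ → C(X, ℝ) := fun n => (t n).2.1 with hfdef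
  set z : ℕ → X := fun n => (t n).2.2 with hzdef
  have hkmono : StrictMono k := fun m n h => (htr m n h).1
  have hkn : ∀ n, n ≤ k n := fun n => hkmono.le_apply
  have hbound : ∀ n : ℕ, (1 : ℝ) / (k n + 1) ≤ 1 / (n + 1) := by
    intro n
    apply one_div_le_one_div_of_le (by positivity)
    have : (n : ℝ) ≤ (k n : ℝ) := by exact_mod_cast hkn n
    linarith
  have hsq : ∀ (u : ℕ → ℝ) (c : ℝ),
      (∀ᶠ m in atTop, dist (u m) c ≤ 1 / (m + 1)) → Tendsto u atTop (𝓝 c) := by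
    intro u c h
    rw [tendsto_iff_dist_tendsto_zero]
    exact tendsto_of_tendsto_of_tendsto_of_le_of_le' tendsto_const_nhds
      tendsto_one_div_add_atTop_nhds_zero_nat
      (Eventually.of_forall fun _ => dist_nonneg) h
  have h1 : ∀ n, Tendsto (fun m => f n (z m)) atTop (𝓝 (f n p)) := by
    intro n
    apply hsq
    filter_upwards [eventually_gt_atTop n] with m hm
    exact le_trans (le_of_lt (htr n m hm).2.2) (hbound m)
  have h2 : ∀ m, Tendsto (fun n => f n (z m)) atTop (𝓝 (g (z m))) := by
    intro m
    apply hsq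
    filter_upwards [eventually_gt_atTop m] with n hn
    exact le_trans (le_of_lt (htr m n hn).2.1) (hbound n)
  have h3 : Tendsto (fun n => f n p) atTop (𝓝 (g p)) := by
    apply hsq
    exact Eventually.of_forall fun n => le_trans (le_of_lt (htP n).2.2.1) (hbound n)
  obtain ⟨L, _, φ, hφ, hLt⟩ :=
    (isCompact_closedBall (0 : ℝ) r).tendsto_subseq (fun m => hgb (z m))
  have hLt' : Tendsto (fun i => g (z (φ i))) atTop (𝓝 L) := hLt
  have hmain : g p = L :=
    hdl f (fun n => (htP n).1) (fun i => z (φ i)) (fun i => (htP (φ i)).2.1)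
      (fun n => f n p) (fun i => g (z (φ i))) (g p) L
      (fun n => (h1 n).comp hφ.tendsto_atTop) (fun i => h2 (φ i)) h3 hLt'
  have hfar : ε / 2 ≤ dist L (g p) :=
    ge_of_tendsto' (hLt'.dist tendsto_const_nhds) (fun i => (htP (φ i)).2.2.2.2)
  rw [← hmain, dist_self] at hfar
  linarith
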